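/- Reduction of ongoing atomic expressions is monotone in the state: if ⟨M⟩_{σ;ε} ⇒ ⟨end⟩_{σ;δ} and σ ⊆ σ', then there exists a log δ' with ⟨M⟩_{σ';ε} ⇒ ⟨end⟩_{σ';δ'}. -/

import Mathlib

/-- Actions: reads and writes of names. -/
inductive Act (N : Type*) where
  | rd (a : N)
  | wt (a : N)

/-- Multiset of names written in a log. -/
def Wl {N : Type*} : List (Act N) → Multiset N
  | [] => 0
  | .wt a :: δ => Wl δ + {a}
  | .rd _ :: δ => Wl δ

/-- Multiset of names read in a log. -/
def Rl {N : Type*} : List (Act N) → Multiset N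
  | [] => 0
  | .rd a :: δ => Rl δ + {a}
  | .wt _ :: δ => Rl δ

/-- Atomic expressions. -/
inductive Expr (N : Type*) where
  | done
  | retry
  | rd (a : N) (M : Expr N)
  | wt (a : N) (M : Expr N)
  | orElse (M₁ M₂ : Expr N)

/-- Ongoing atomic expressions. -/
inductive Ong (N : Type*) where
  | block (M : Expr N) (σ : Multiset N) (δ : List (Act N))
  | orElse (A B : Ong N)

/-- One-step reduction of ongoing expressions. -/
inductive Step {N : Type*} : Ong N → Ong N → Prop where
  | rdOk {a : N} {M σ δ} (h : Rl δ + {a} ≤ σ) :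
      Step (.block (.rd a M) σ δ) (.block M σ (δ ++ [.rd a]))
  | rdFail {a : N} {M σ δ} (h : ¬ Rl δ + {a} ≤ σ) :
      Step (.block (.rd a M) σ δ) (.block .retry σ δ)
  | wr {a : N} {M σ δ} :
      Step (.block (.wt a M) σ δ) (.block M σ (δ ++ [.wt a]))
  | orE {M₁ M₂ : Expr N} {σ δ} :
      Step (.block (.orElse M₁ M₂) σ δ) (.orElse (.block M₁ σ δ) (.block M₂ σ δ))
  | orFail {σ : Multiset N} {δ B} : Step (.orElse (.block .retry σ δ) B) B
  | orEnd {σ : Multiset N} {δ B} : Step (.orElse (.block .done σ δ) B) (.block .done σ δ)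
  | congL {A A' B : Ong N} (h : Step A A') : Step (.orElse A B) (.orElse A' B)
  | congR {A B B' : Ong N} (h : Step B B') : Step (.orElse A B) (.orElse A B')

/-- Multi-step reduction. -/
def Steps {N : Type*} : Ong N → Ong N → Prop := Relation.ReflTransGen Step

/-- Logs with the same effect on state σ. -/
def EffEq {N : Type*} [DecidableEq N] (σ : Multiset N) (δ δ' : List (Act N)) : Prop :=
  σ - Rl δ + Wl δ = σ - Rl δ' + Wl δ'

/-- Weak atomic equivalence. -/
def AEq {N : Type*} [DecidableEq N] (M M' : Expr N) : Prop :=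
  ∀ σ : Multiset N,
    ((∃ δ, Steps (.block M σ []) (.block .retry σ δ)) ∧
     (∃ δ', Steps (.block M' σ []) (.block .retry σ δ'))) ∨
    (∃ δ δ', Steps (.block M σ []) (.block .done σ δ) ∧
             Steps (.block M' σ []) (.block .done σ δ') ∧ EffEq σ δ δ')

/-- Prefixing an action onto an expression. -/
def pre {N : Type*} : Act N → Expr N → Expr N
  | .rd a, M => .rd a M
  | .wt a, M => .wt a M

/-- The pure sequence expression α₁.….αₙ.end. -/
def seq {N : Type*} (K : List (Act N)) : Expr N := K.foldr pre .done

/-- Right-nested orElse of a nonempty list of expressions. -/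
def ors {N : Type*} : Expr N → List (Expr N) → Expr N
  | M, [] => M
  | M, M' :: rest => .orElse M (ors M' rest)

open Classical in
/-- Deterministic evaluator: `some δ'` means ends in `done` with log `δ'`, `none` means retry. -/
noncomputable def eval {N : Type*} : Expr N → Multiset N → List (Act N) → Option (List (Act N))
  | .done, _, δ => some δ
  | .retry, _, _ => none
  | .rd a M, σ, δ => if Rl δ + {a} ≤ σ then eval M σ (δ ++ [.rd a]) else none
  | .wt a M, σ, δ => eval M σ (δ ++ [.wt a])
  | .orElse M₁ M₂, σ, δ => (eval M₁ σ δ).elim (eval M₂ σ δ) some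

noncomputable def evalO {N : Type*} : Ong N → Option (List (Act N))
  | .block M σ δ => eval M σ δ
  | .orElse A B => (evalO A).elim (evalO B) some

lemma step_evalO {N : Type*} {A A' : Ong N} (h : Step A A') : evalO A = evalO A' := by
  induction h with
  | rdOk h => simp only [evalO, eval]; rw [if_pos h]
  | rdFail h => simp only [evalO, eval]; rw [if_neg h]
  | wr => simp only [evalO, eval]
  | orE => simp only [evalO, eval]
  | orFail => simp only [evalO, eval, Option.elim]
  | orEnd => simp only [evalO, eval, Option.elim]
  | congL _ ih => simp only [evalO, ih]
  | congR _ ih => simp only [evalO, ih]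

lemma steps_evalO {N : Type*} {A A' : Ong N} (h : Steps A A') : evalO A = evalO A' := by
  induction h with
  | refl => rfl
  | tail _ hs ih => exact ih.trans (step_evalO hs)

lemma eval_mono {N : Type*} (M : Expr N) (σ σ' : Multiset N) (hσ : σ ≤ σ') :
    ∀ δ₀ : List (Act N), (eval M σ δ₀).isSome → (eval M σ' δ₀).isSome := by
  induction M with
  | done => intro δ₀ _; simp [eval]
  | retry => intro δ₀ h; simp [eval] at h
  | rd a M ih =>
    intro δ₀ h
    simp only [eval] at h ⊢
    split at h
    · next hc => rw [if_pos (hc.trans hσ)]; exact ih _ h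
    · simp at h
  | wt a M ih => intro δ₀ h; exact ih _ h
  | orElse M₁ M₂ ih₁ ih₂ =>
    intro δ₀ h
    simp only [eval] at h ⊢
    cases h1 : eval M₁ σ' δ₀ with
    | some v => simp [h1]
    | none =>
      cases h2 : eval M₁ σ δ₀ with
      | some v =>
        have := ih₁ δ₀ (by simp [h2])
        rw [h1] at this; simp at this
      | none => rw [h2] at h; simp only [Option.elim] at h ⊢; exact ih₂ _ h

lemma steps_congL {N : Type*} {A A' B : Ong N} (h : Steps A A') :
    Steps (.orElse A B) (.orElse A' B) :=
  Relation.ReflTransGen.lift (fun X => Ong.orElse X B) (fun _ _ hs => Step.congL hs) _ _ h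

lemma eval_sound {N : Type*} (M : Expr N) (σ : Multiset N) :
    ∀ δ₀ : List (Act N),
      (∀ δ', eval M σ δ₀ = some δ' → Steps (.block M σ δ₀) (.block .done σ δ')) ∧
      (eval M σ δ₀ = none → ∃ δ'', Steps (.block M σ δ₀) (.block .retry σ δ'')) := by
  induction M with
  | done =>
    intro δ₀
    constructor
    · intro δ' h; simp only [eval, Option.some.injEq] at h; subst h; exact .refl
    · intro h; simp [eval] at h
  | retry =>
    intro δ₀
    exact ⟨fun δ' h => by simp [eval] at h, fun _ => ⟨δ₀, .refl⟩⟩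
  | rd a M ih =>
    intro δ₀
    constructor
    · intro δ' h
      simp only [eval] at h
      split at h
      · next hc => exact .head (Step.rdOk hc) ((ih _).1 _ h)
      · simp at h
    · intro h
      simp only [eval] at h
      split at h
      · next hc =>
        obtain ⟨δ'', hs⟩ := (ih _).2 h
        exact ⟨δ'', .head (Step.rdOk hc) hs⟩
      · next hc => exact ⟨δ₀, .single (Step.rdFail hc)⟩
  | wt a M ih =>
    intro δ₀
    constructor
    · intro δ' h; exact .head Step.wr ((ih _).1 _ h)
    · intro h
      obtain ⟨δ'', hs⟩ := (ih _).2 h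
      exact ⟨δ'', .head Step.wr hs⟩
  | orElse M₁ M₂ ih₁ ih₂ =>
    intro δ₀
    constructor
    · intro δ' h
      simp only [eval] at h
      cases h1 : eval M₁ σ δ₀ with
      | some v =>
        rw [h1] at h; simp only [Option.elim, Option.some.injEq] at h; subst h
        exact .head Step.orE ((steps_congL ((ih₁ δ₀).1 _ h1)).tail Step.orEnd)
      | none =>
        rw [h1] at h; simp only [Option.elim] at h
        obtain ⟨δ'', hs⟩ := (ih₁ δ₀).2 h1
        exact .head Step.orE (((steps_congL hs).tail Step.orFail).trans ((ih₂ δ₀).1 _ h))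
    · intro h
      simp only [eval] at h
      cases h1 : eval M₁ σ δ₀ with
      | some v => rw [h1] at h; simp [Option.elim] at h
      | none =>
        rw [h1] at h; simp only [Option.elim] at h
        obtain ⟨δ'', hs⟩ := (ih₁ δ₀).2 h1
        obtain ⟨δ₃, hs₂⟩ := (ih₂ δ₀).2 h
        exact ⟨δ₃, .head Step.orE (((steps_congL hs).tail Step.orFail).trans hs₂)⟩

/-- Reduction of ongoing atomic expressions is monotone in the state. -/
theorem stmt5 {N : Type*} (M : Expr N) (σ σ' : Multiset N) (δ : List (Act N))
    (h : Steps (.block M σ []) (.block .done σ δ)) (hσ : σ ≤ σ') :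
    ∃ δ', Steps (.block M σ' []) (.block .done σ' δ') := by
  have he : eval M σ [] = some δ := steps_evalO h
  have hm : (eval M σ' []).isSome := eval_mono M σ σ' hσ [] (by simp [he])
  obtain ⟨δ', hδ'⟩ := Option.isSome_iff_exists.mp hm
  exact ⟨δ', (eval_sound M σ' []).1 δ' hδ'⟩
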